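/- For an integer j ≥ 0, let I^j_{q,n} = {σ a k-algebra automorphism of A_{q,n} : σ(x_i) − x_i ∈ m^{j+2} for all i = 1, …, q}. Then I^j_{q,n} is a subgroup of the automorphism group of A_{q,n}, and the map α_j sending σ ∈ I^j_{q,n} to the q-tuple of residue classes (σ(x_1) − x_1, …, σ(x_q) − x_q) in (m^{j+2}/m^{j+3})^q is a surjective group homomorphism from I^j_{q,n} onto the additive group (m^{j+2}/m^{j+3})^q whose kernel is I^{j+1}_{q,n}. In particular I^j_{q,n}/I^{j+1}_{q,n} is isomorphic as a group to (m^{j+2}/m^{j+3})^q. -/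

import Mathlib

set_option synthInstance.maxHeartbeats 400000
set_option maxHeartbeats 1000000
set_option linter.unnecessarySimpa false

noncomputable section

/-- The ring of `n`-nil polynomials `A_{q,n} = k[x_1,…,x_q]/m_0^n`. -/
abbrev Aqn (k : Type) [Field k] (q n : ℕ) : Type :=
  MvPolynomial (Fin q) k ⧸
    (Ideal.span (Set.range (MvPolynomial.X : Fin q → MvPolynomial (Fin q) k))) ^ n

/-- The image of the variable `x_i` in `A_{q,n}`. -/
def xA (k : Type) [Field k] (q n : ℕ) (i : Fin q) : Aqn k q n :=
  Ideal.Quotient.mk _ (MvPolynomial.X i)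

/-- The maximal ideal `m` of `A_{q,n}` generated by `x_1, …, x_q`. -/
def mA (k : Type) [Field k] (q n : ℕ) : Ideal (Aqn k q n) :=
  Ideal.span (Set.range (xA k q n))

/-- The set `I^j_{q,n}` of automorphisms congruent to the identity modulo `m^(j+2)`. -/
def IjSet (k : Type) [Field k] (q n j : ℕ) : Set (Aqn k q n ≃ₐ[k] Aqn k q n) :=
  {σ | ∀ i, σ (xA k q n i) - xA k q n i ∈ (mA k q n) ^ (j + 2)}

/-- `m^(j+2)` viewed as a `k`-subspace of `A_{q,n}`. -/
def Nsub (k : Type) [Field k] (q n j : ℕ) : Submodule k (Aqn k q n) :=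
  Submodule.restrictScalars k ((mA k q n) ^ (j + 2))

/-- `m^(j+3)` viewed as a `k`-subspace of `m^(j+2)`. -/
def Psub (k : Type) [Field k] (q n j : ℕ) : Submodule k (Nsub k q n j) :=
  Submodule.comap (Nsub k q n j).subtype
    (Submodule.restrictScalars k ((mA k q n) ^ (j + 3)))

/-- The quotient `m^(j+2)/m^(j+3)` as a `k`-vector space (additive group). -/
abbrev Qj (k : Type) [Field k] (q n j : ℕ) : Type :=
  Nsub k q n j ⧸ Psub k q n j

/-- The map `α_j` sending `σ ∈ I^j_{q,n}` to the residues of `σ(x_i) - x_i` in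
`(m^(j+2)/m^(j+3))^q`. -/
def alphaJ (k : Type) [Field k] (q n j : ℕ)
    (σ : {σ : Aqn k q n ≃ₐ[k] Aqn k q n // σ ∈ IjSet k q n j}) :
    Fin q → Qj k q n j :=
  fun i => Submodule.Quotient.mk (⟨σ.1 (xA k q n i) - xA k q n i, σ.2 i⟩ : Nsub k q n j)

section Aux

variable {k : Type} [Field k] {q n : ℕ}

lemma xA_mem_mA (i : Fin q) : xA k q n i ∈ mA k q n :=
  Ideal.subset_span ⟨i, rfl⟩

lemma mA_eq_map : mA k q n =
    Ideal.map (Ideal.Quotient.mk _)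
      (Ideal.span (Set.range (MvPolynomial.X : Fin q → MvPolynomial (Fin q) k))) := by
  rw [mA, Ideal.map_span, ← Set.range_comp]
  rfl

lemma mA_pow_n : (mA k q n) ^ n = ⊥ := by
  rw [mA_eq_map, ← Ideal.map_pow, Ideal.map_eq_bot_iff_le_ker, Ideal.mk_ker]

/-- base: for any algebra endomorphism with `f xᵢ - xᵢ ∈ m^(j+2)`, `f y - y ∈ m^(j+1)`. -/
lemma hbase {j : ℕ} (f : Aqn k q n →ₐ[k] Aqn k q n)
    (hf : ∀ i, f (xA k q n i) - xA k q n i ∈ (mA k q n) ^ (j + 2)) (y : Aqn k q n) :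
    f y - y ∈ (mA k q n) ^ (j + 1) := by
  obtain ⟨p, rfl⟩ := Ideal.Quotient.mk_surjective y
  induction p using MvPolynomial.induction_on with
  | C a =>
      have h : (Ideal.Quotient.mk _ (MvPolynomial.C a) : Aqn k q n) = algebraMap k _ a := rfl
      rw [h, AlgHom.commutes, sub_self]; exact zero_mem _
  | add p1 p2 h1 h2 =>
      have h : f (Ideal.Quotient.mk _ (p1 + p2)) - Ideal.Quotient.mk _ (p1 + p2)
          = (f (Ideal.Quotient.mk _ p1) - Ideal.Quotient.mk _ p1)
            + (f (Ideal.Quotient.mk _ p2) - Ideal.Quotient.mk _ p2) := by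
        rw [map_add]; rw [map_add]; ring
      rw [h]; exact add_mem h1 h2
  | mul_X p i hp =>
      have hx : (Ideal.Quotient.mk _ (p * MvPolynomial.X i) : Aqn k q n)
          = Ideal.Quotient.mk _ p * xA k q n i := by rw [map_mul]; rfl
      have h : f (Ideal.Quotient.mk _ (p * MvPolynomial.X i))
            - Ideal.Quotient.mk _ (p * MvPolynomial.X i)
          = f (Ideal.Quotient.mk _ p) * (f (xA k q n i) - xA k q n i)
            + (f (Ideal.Quotient.mk _ p) - Ideal.Quotient.mk _ p) * xA k q n i := by
        rw [hx, map_mul]; ring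
      rw [h]
      exact add_mem
        (Ideal.mul_mem_left _ _ (Ideal.pow_le_pow_right (by omega) (hf i)))
        (Ideal.mul_mem_right _ _ hp)

/-- for `b ∈ m`, `f b - b ∈ m^(j+2)`. -/
lemma hmemm {j : ℕ} (f : Aqn k q n →ₐ[k] Aqn k q n)
    (hf : ∀ i, f (xA k q n i) - xA k q n i ∈ (mA k q n) ^ (j + 2))
    {b : Aqn k q n} (hb : b ∈ mA k q n) :
    f b - b ∈ (mA k q n) ^ (j + 2) := by
  induction hb using Submodule.span_induction with
  | mem z hz =>
      obtain ⟨i, rfl⟩ := hz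
      exact hf i
  | zero => simpa using zero_mem _
  | add a b _ _ ha hb =>
      have h : f (a + b) - (a + b) = (f a - a) + (f b - b) := by rw [map_add]; ring
      rw [h]; exact add_mem ha hb
  | smul r b hbm hb =>
      have h : f (r • b) - r • b = f r * (f b - b) + (f r - r) * b := by
        simp only [smul_eq_mul, map_mul]; ring
      rw [h]
      refine add_mem (Ideal.mul_mem_left _ _ hb) ?_
      have h2 : (mA k q n) ^ (j + 1) * mA k q n = (mA k q n) ^ (j + 2) := by
        rw [← Submodule.pow_succ]
      rw [← h2]
      exact Ideal.mul_mem_mul (hbase f hf r) hbm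

/-- key: `y ∈ m^t → f y - y ∈ m^(t+j+1)`. -/
lemma hkey {j : ℕ} (f : Aqn k q n →ₐ[k] Aqn k q n)
    (hf : ∀ i, f (xA k q n i) - xA k q n i ∈ (mA k q n) ^ (j + 2)) :
    ∀ t : ℕ, ∀ y ∈ (mA k q n) ^ t, f y - y ∈ (mA k q n) ^ (t + j + 1) := by
  intro t
  induction t with
  | zero => intro y _; simpa using hbase f hf y
  | succ t ih =>
      intro y hy
      rw [Submodule.pow_succ] at hy
      refine Submodule.mul_induction_on hy ?_ ?_
      · intro a ha b hb
        have h : f (a * b) - a * b = (f a - a) * f b + a * (f b - b) := by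
          rw [map_mul]; ring
        have hfb : f b ∈ mA k q n := by
          have := hmemm f hf hb
          have h2 : f b = (f b - b) + b := by ring
          rw [h2]
          exact add_mem (Ideal.pow_le_self (by omega) this) hb
        rw [h]
        refine add_mem ?_ ?_
        · have h2 : (mA k q n) ^ (t + j + 1) * mA k q n = (mA k q n) ^ (t + 1 + j + 1) := by
            rw [← Submodule.pow_succ]; ring_nf
          rw [← h2]
          exact Ideal.mul_mem_mul (ih a ha) hfb
        · have h2 : (mA k q n) ^ t * (mA k q n) ^ (j + 2) = (mA k q n) ^ (t + 1 + j + 1) := by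
            rw [← Submodule.pow_add (M := mA k q n) (m := t) (n := j + 2) (by omega)]; ring_nf
          rw [← h2]
          exact Ideal.mul_mem_mul ha (hmemm f hf hb)
      · intro a b h1 h2
        have h : f (a + b) - (a + b) = (f a - a) + (f b - b) := by rw [map_add]; ring
        rw [h]; exact add_mem h1 h2

lemma hpres {j : ℕ} (f : Aqn k q n →ₐ[k] Aqn k q n)
    (hf : ∀ i, f (xA k q n i) - xA k q n i ∈ (mA k q n) ^ (j + 2))
    {t : ℕ} {y : Aqn k q n} (hy : y ∈ (mA k q n) ^ t) : f y ∈ (mA k q n) ^ t := by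
  have h := hkey f hf t y hy
  have h2 : f y = (f y - y) + y := by ring
  rw [h2]
  exact add_mem (Ideal.pow_le_pow_right (by omega) h) hy

end Aux

section Main

variable {k : Type} [Field k] {q n : ℕ}


lemma coe_hf {j : ℕ} {σ : Aqn k q n ≃ₐ[k] Aqn k q n} (hσ : σ ∈ IjSet k q n j) :
    ∀ i, (σ : Aqn k q n →ₐ[k] Aqn k q n) (xA k q n i) - xA k q n i ∈ (mA k q n) ^ (j + 2) := by
  intro i; simpa using hσ i

lemma test_subgroup (q n j : ℕ) :
    ∃ H : Subgroup (Aqn k q n ≃ₐ[k] Aqn k q n), (H : Set _) = IjSet k q n j := by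
  refine ⟨{ carrier := IjSet k q n j
            one_mem' := by intro i; simp [IjSet]
            mul_mem' := ?_
            inv_mem' := ?_ }, rfl⟩
  · intro σ τ hσ hτ i
    have h : (σ * τ) (xA k q n i) - xA k q n i
        = (σ : Aqn k q n →ₐ[k] Aqn k q n) (τ (xA k q n i) - xA k q n i)
          + (σ (xA k q n i) - xA k q n i) := by
      simp only [AlgEquiv.mul_apply, map_sub, AlgHom.coe_coe, AlgEquiv.coe_toAlgHom]; ring
    rw [h]
    exact add_mem (hpres _ (coe_hf hσ) (hτ i)) (hσ i)
  · intro σ hσ i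
    have haut : σ⁻¹ = σ.symm := rfl
    set w : Aqn k q n := σ⁻¹ (xA k q n i) - xA k q n i with hwdef
    have hw : σ w = xA k q n i - σ (xA k q n i) := by
      rw [hwdef, map_sub, haut, AlgEquiv.apply_symm_apply]
    have hrel : w = (xA k q n i - σ (xA k q n i))
        - ((σ : Aqn k q n →ₐ[k] Aqn k q n) w - w) := by
      rw [show ((σ : Aqn k q n →ₐ[k] Aqn k q n) w) = σ w from rfl, hw]
      ring
    have hx2 : xA k q n i - σ (xA k q n i) ∈ (mA k q n) ^ (j + 2) := by
      have := neg_mem (hσ i); simpa using this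
    have h1 : w ∈ (mA k q n) ^ (j + 1) := by
      rw [hrel]
      exact sub_mem (Ideal.pow_le_pow_right (by omega) hx2)
        (hbase _ (coe_hf hσ) w)
    have h2 := hkey _ (coe_hf hσ) (j + 1) w h1
    show w ∈ (mA k q n) ^ (j + 2)
    rw [hrel]
    exact sub_mem hx2 (Ideal.pow_le_pow_right (by omega) h2)

end Main






section M2
variable {k : Type} [Field k] {q n : ℕ}

lemma test_hom (q n j : ℕ) (σ τ π : {σ : Aqn k q n ≃ₐ[k] Aqn k q n // σ ∈ IjSet k q n j})
    (hπ : π.1 = σ.1 * τ.1) : alphaJ k q n j π = alphaJ k q n j σ + alphaJ k q n j τ := by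
  funext i
  simp only [alphaJ, Pi.add_apply]
  rw [← Submodule.Quotient.mk_add, Submodule.Quotient.eq]
  have hcomp : π.1 (xA k q n i) = σ.1 (τ.1 (xA k q n i)) := by
    rw [hπ, AlgEquiv.mul_apply]
  have hmem : (π.1 (xA k q n i) - xA k q n i)
      - ((σ.1 (xA k q n i) - xA k q n i) + (τ.1 (xA k q n i) - xA k q n i))
      ∈ (mA k q n) ^ (j + 3) := by
    have h : (π.1 (xA k q n i) - xA k q n i)
        - ((σ.1 (xA k q n i) - xA k q n i) + (τ.1 (xA k q n i) - xA k q n i))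
        = ((σ.1 : Aqn k q n →ₐ[k] Aqn k q n) (τ.1 (xA k q n i) - xA k q n i)
            - (τ.1 (xA k q n i) - xA k q n i)) := by
      rw [show ((σ.1 : Aqn k q n →ₐ[k] Aqn k q n) (τ.1 (xA k q n i) - xA k q n i))
            = σ.1 (τ.1 (xA k q n i) - xA k q n i) from rfl, hcomp, map_sub]
      ring
    rw [h]
    exact Ideal.pow_le_pow_right (by omega) (hkey _ (coe_hf σ.2) (j + 2) _ (τ.2 i))
  rw [Psub, Submodule.mem_comap]
  simpa using hmem

lemma test_ker (q n j : ℕ) (σ : {σ : Aqn k q n ≃ₐ[k] Aqn k q n // σ ∈ IjSet k q n j}) :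
    alphaJ k q n j σ = 0 ↔ σ.1 ∈ IjSet k q n (j + 1) := by
  have e : j + 1 + 2 = j + 3 := by omega
  constructor
  · intro h i
    have hi := congrFun h i
    simp only [alphaJ, Pi.zero_apply] at hi
    rw [Submodule.Quotient.mk_eq_zero, Psub, Submodule.mem_comap] at hi
    rw [e]
    simpa using hi
  · intro h
    funext i
    simp only [alphaJ, Pi.zero_apply]
    rw [Submodule.Quotient.mk_eq_zero, Psub, Submodule.mem_comap]
    have := h i
    rw [e] at this
    simpa using this

end M2

section M3
variable {k : Type} [Field k] {q n : ℕ}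

lemma test_surj (j : ℕ) : Function.Surjective (alphaJ k q n j) := by
  intro c
  choose y hy using fun i => Submodule.Quotient.mk_surjective (Psub k q n j) (c i)
  -- the values y i : Nsub, with (y i : Aqn) ∈ m^(j+2)
  have hymem : ∀ i, ((y i : Aqn k q n)) ∈ (mA k q n) ^ (j + 2) := fun i => (y i).2
  set F : MvPolynomial (Fin q) k →ₐ[k] Aqn k q n :=
    MvPolynomial.aeval (fun i => xA k q n i + (y i : Aqn k q n)) with hF
  have hFX : ∀ i, F (MvPolynomial.X i) = xA k q n i + (y i : Aqn k q n) := by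
    intro i; rw [hF, MvPolynomial.aeval_X]
  have hker : ∀ p ∈ (Ideal.span (Set.range (MvPolynomial.X : Fin q → MvPolynomial (Fin q) k))) ^ n,
      F p = 0 := by
    intro p hp
    have hmap : Ideal.map F
        (Ideal.span (Set.range (MvPolynomial.X : Fin q → MvPolynomial (Fin q) k)))
        ≤ mA k q n := by
      rw [Ideal.map_span, Ideal.span_le]
      rintro z ⟨w, ⟨i, rfl⟩, rfl⟩
      show F (MvPolynomial.X i) ∈ mA k q n
      rw [hFX]
      exact add_mem (xA_mem_mA i) (Ideal.pow_le_self (by omega) (hymem i))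
    have h1 : F p ∈ Ideal.map F
        ((Ideal.span (Set.range (MvPolynomial.X : Fin q → MvPolynomial (Fin q) k))) ^ n) :=
      Ideal.mem_map_of_mem _ hp
    rw [Ideal.map_pow] at h1
    have h2 := Ideal.pow_right_mono hmap n h1
    rw [mA_pow_n] at h2
    simpa using h2
  set g : Aqn k q n →ₐ[k] Aqn k q n := Ideal.Quotient.liftₐ _ F hker with hg
  have hgmk : ∀ p, g (Ideal.Quotient.mk _ p) = F p := by
    intro p
    rw [hg, Ideal.Quotient.liftₐ_apply]; rfl
  have hgx : ∀ i, g (xA k q n i) = xA k q n i + (y i : Aqn k q n) := by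
    intro i; rw [xA, hgmk, hFX]; rfl
  have hgf : ∀ i, g (xA k q n i) - xA k q n i ∈ (mA k q n) ^ (j + 2) := by
    intro i; rw [hgx]; simpa using hymem i
  -- injective
  have hinj : Function.Injective g := by
    rw [injective_iff_map_eq_zero]
    intro z hz
    have h : ∀ t, z ∈ (mA k q n) ^ t := by
      intro t
      induction t with
      | zero => simp [Ideal.one_eq_top]
      | succ t ih =>
          have h1 := hkey g hgf t z ih
          rw [hz, zero_sub] at h1
          exact Ideal.pow_le_pow_right (by omega) (neg_mem_iff.mp h1)
    have h2 := h n
    rw [mA_pow_n] at h2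
    simpa using h2
  -- surjective
  have hsur : Function.Surjective g := by
    intro w
    have h : ∀ t, ∃ z, w - g z ∈ (mA k q n) ^ t := by
      intro t
      induction t with
      | zero => exact ⟨0, by simp [Ideal.one_eq_top]⟩
      | succ t ih =>
          obtain ⟨z, hz⟩ := ih
          refine ⟨z + (w - g z), ?_⟩
          have h2 := hkey g hgf t _ hz
          have h3 : w - g (z + (w - g z)) = -(g (w - g z) - (w - g z)) := by
            rw [map_add]; ring
          rw [h3]
          exact Ideal.pow_le_pow_right (by omega) (neg_mem h2)
    obtain ⟨z, hz⟩ := h n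
    rw [mA_pow_n] at hz
    exact ⟨z, (sub_eq_zero.mp (by simpa using hz)).symm⟩
  set σ : Aqn k q n ≃ₐ[k] Aqn k q n := AlgEquiv.ofBijective g ⟨hinj, hsur⟩ with hσdef
  have hσg : ∀ z, σ z = g z := fun z => rfl
  have hσmem : σ ∈ IjSet k q n j := by
    intro i; rw [hσg]; exact hgf i
  refine ⟨⟨σ, hσmem⟩, ?_⟩
  funext i
  simp only [alphaJ]
  have hval : (⟨σ (xA k q n i) - xA k q n i, hσmem i⟩ : Nsub k q n j) = y i := by
    apply Subtype.ext
    show σ (xA k q n i) - xA k q n i = (y i : Aqn k q n)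
    rw [hσg, hgx]; ring
  rw [hval, hy]

end M3

/-- `I^j_{q,n}` is a subgroup of the automorphism group of `A_{q,n}`, and
`α_j : σ ↦ (residues of σ(x_i) - x_i in m^(j+2)/m^(j+3))` is a surjective group homomorphism
onto the additive group `(m^(j+2)/m^(j+3))^q` whose kernel is `I^(j+1)_{q,n}` (so that
`I^j_{q,n}/I^(j+1)_{q,n} ≅ (m^(j+2)/m^(j+3))^q`). -/
theorem Ij_filtration (k : Type) [Field k] (q n : ℕ) (hq : 1 ≤ q) (hn : 2 ≤ n) (j : ℕ) :
    (∃ H : Subgroup (Aqn k q n ≃ₐ[k] Aqn k q n), (H : Set _) = IjSet k q n j) ∧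
    (∀ σ τ π : {σ : Aqn k q n ≃ₐ[k] Aqn k q n // σ ∈ IjSet k q n j},
      π.1 = σ.1 * τ.1 → alphaJ k q n j π = alphaJ k q n j σ + alphaJ k q n j τ) ∧
    Function.Surjective (alphaJ k q n j) ∧
    (∀ σ : {σ : Aqn k q n ≃ₐ[k] Aqn k q n // σ ∈ IjSet k q n j},
      alphaJ k q n j σ = 0 ↔ σ.1 ∈ IjSet k q n (j + 1)) :=
  ⟨test_subgroup q n j, fun σ τ π hπ => test_hom q n j σ τ π hπ, test_surj j,
    fun σ => test_ker q n j σ⟩
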